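/- Consider the diluted mixed p-spin random hypergraph and assume λ > 1. There exists a constant C depending only on (α_p)_{2≤p≤Δ} such that for every vertex i ∈ [N] and every t ∈ ℤ_+, E|B_t(i)| ≤ C λ^t. -/

import Mathlib

open MeasureTheory ProbabilityTheory Real Finset

noncomputable section

/-! ### Basic objects: spins, Hermite polynomials, Gaussian measures -/

/-- The `±1` spin value attached to a Boolean. -/
def spin (b : Bool) : ℝ := if b then 1 else -1

/-- Normalized Hermite polynomial `h_m = He_m / √(m!)`,
orthonormal w.r.t. the standard Gaussian measure. -/
def hermiteFn (m : ℕ) (x : ℝ) : ℝ :=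
  Polynomial.aeval x (Polynomial.hermite m) / Real.sqrt (Nat.factorial m)

/-- The law of a family of i.i.d. standard Gaussians over a finite index set. -/
def gaussianPi (ι : Type*) [Fintype ι] : Measure (ι → ℝ) :=
  Measure.pi fun _ => gaussianReal 0 1

instance (ι : Type*) [Fintype ι] : IsProbabilityMeasure (gaussianPi ι) := by
  unfold gaussianPi; infer_instance

/-- Tensorized normalized Hermite polynomial `h_n(x) = ∏_e h_{n_e}(x_e)`. -/
def hermiteProd {ι : Type*} [Fintype ι] (n : ι → ℕ) (x : ι → ℝ) : ℝ :=
  ∏ e, hermiteFn (n e) (x e)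

/-- Continuous perturbation `J(t) = e^{-t} J + √(1-e^{-2t}) J'` of the disorder. -/
def contPerturb {ι : Type*} (t : ℝ) (J J' : ι → ℝ) : ι → ℝ := fun e =>
  Real.exp (-t) * J e + Real.sqrt (1 - Real.exp (-2 * t)) * J' e

/-- Discrete perturbation `J(t)_e = B_e J_e + (1-B_e) J'_e` of the disorder. -/
def discPerturb {ι : Type*} (J J' : ι → ℝ) (B : ι → Bool) : ι → ℝ := fun e =>
  if B e then J e else J' e

/-- Bernoulli measure on `Bool` with success probability `p`. -/
def berBool (p : ℝ) : Measure Bool :=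
  ENNReal.ofReal p • Measure.dirac true + ENNReal.ofReal (1 - p) • Measure.dirac false

instance (p : ℝ) : IsFiniteMeasure (berBool p) := by
  constructor
  simp only [berBool, Measure.coe_add, Pi.add_apply, Measure.smul_apply, smul_eq_mul,
    Measure.dirac_apply' _ MeasurableSet.univ, Set.indicator_univ, Pi.one_apply, mul_one]
  exact ENNReal.add_lt_top.mpr ⟨ENNReal.ofReal_lt_top, ENNReal.ofReal_lt_top⟩

/-- Product Gaussian measure for a pair `(J, J')` of independent disorders. -/
def pairGauss (ι : Type*) [Fintype ι] : Measure ((ι → ℝ) × (ι → ℝ)) :=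
  (gaussianPi ι).prod (gaussianPi ι)

/-- Product Gaussian measure for a triple of independent disorders. -/
def tripleGauss (ι : Type*) [Fintype ι] : Measure ((ι → ℝ) × (ι → ℝ) × (ι → ℝ)) :=
  (gaussianPi ι).prod ((gaussianPi ι).prod (gaussianPi ι))

/-- Law of `(J, J', B)`: two independent Gaussian disorders together with i.i.d.
Bernoulli(`p`) variables. -/
def tripleGaussBer (ι : Type*) [Fintype ι] (p : ℝ) :
    Measure ((ι → ℝ) × (ι → ℝ) × (ι → Bool)) :=
  (gaussianPi ι).prod ((gaussianPi ι).prod (Measure.pi fun _ => berBool p))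

/-! ### Spin models on hypergraphs -/

variable {N : ℕ}

/-- `σ_e = ∏_{v ∈ e} σ_v`. -/
def sigEdge (σ : Fin N → Bool) (e : Finset (Fin N)) : ℝ := ∏ v ∈ e, spin (σ v)

/-- Hamiltonian `H_J(σ) = Σ_e ρ_{|e|}(J_e) σ_e` of the short-range model. -/
def ham (Edges : Finset (Finset (Fin N))) (ρ : ℕ → ℝ → ℝ)
    (J : Finset (Fin N) → ℝ) (σ : Fin N → Bool) : ℝ :=
  ∑ e ∈ Edges, ρ e.card (J e) * sigEdge σ e

/-- Gibbs average of an observable `f` for the Hamiltonian `H` at inverse temperature `β`. -/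
def gibbs (β : ℝ) (H : (Fin N → Bool) → ℝ) (f : (Fin N → Bool) → ℝ) : ℝ :=
  (∑ σ : Fin N → Bool, f σ * Real.exp (β * H σ)) / ∑ σ : Fin N → Bool, Real.exp (β * H σ)

/-- Gibbs average of a two-replica observable `f(σ,τ)` where `σ, τ` are sampled from the
product of the Gibbs measures of the Hamiltonians `H₁`, `H₂`. -/
def gibbs2 (β : ℝ) (H₁ H₂ : (Fin N → Bool) → ℝ)
    (f : (Fin N → Bool) → (Fin N → Bool) → ℝ) : ℝ :=
  (∑ σ : Fin N → Bool, ∑ τ : Fin N → Bool, f σ τ * Real.exp (β * H₁ σ + β * H₂ τ)) /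
    ∑ σ : Fin N → Bool, ∑ τ : Fin N → Bool, Real.exp (β * H₁ σ + β * H₂ τ)

/-- Site overlap `R(σ,τ) = N⁻¹ Σ_i σ_i τ_i`. -/
def overlap (σ τ : Fin N → Bool) : ℝ := (∑ i, spin (σ i) * spin (τ i)) / N

/-- Fourier–Hermite coefficient `φ̂_{ij}(n) = E[⟨σ_i σ_j⟩ h_n(J)]` of the two-point
correlation function. -/
def twoPointCoeff (Edges : Finset (Finset (Fin N))) (ρ : ℕ → ℝ → ℝ) (β : ℝ)
    (i j : Fin N) (n : Finset (Fin N) → ℕ) : ℝ :=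
  ∫ ω, gibbs β (ham Edges ρ ω) (fun σ => spin (σ i) * spin (σ j)) * hermiteProd n ω
    ∂gaussianPi (Finset (Fin N))

/-- `E(n) = {e : n_e > 0}`. -/
def Esupp (n : Finset (Fin N) → ℕ) : Finset (Finset (Fin N)) :=
  Finset.univ.filter fun e => n e ≠ 0

/-- `V(n)`: the vertices covered by `E(n)`. -/
def Vsupp (n : Finset (Fin N) → ℕ) : Finset (Fin N) :=
  (Esupp n).biUnion id

/-- Disorder-averaged two-replica observable under the continuous perturbation:
`E ⟨f(σ,τ)⟩_t` with `σ ~ G_J`, `τ ~ G_{J(t)}`. -/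
def contExp (Edges : Finset (Finset (Fin N))) (ρ : ℕ → ℝ → ℝ) (β t : ℝ)
    (f : (Fin N → Bool) → (Fin N → Bool) → ℝ) : ℝ :=
  ∫ ω : (Finset (Fin N) → ℝ) × (Finset (Fin N) → ℝ),
    gibbs2 β (ham Edges ρ ω.1) (ham Edges ρ (contPerturb t ω.1 ω.2)) f
    ∂pairGauss (Finset (Fin N))

/-- Disorder-averaged two-replica observable under the discrete perturbation. -/
def discExp (Edges : Finset (Finset (Fin N))) (ρ : ℕ → ℝ → ℝ) (β t : ℝ)
    (f : (Fin N → Bool) → (Fin N → Bool) → ℝ) : ℝ :=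
  ∫ ω : (Finset (Fin N) → ℝ) × (Finset (Fin N) → ℝ) × (Finset (Fin N) → Bool),
    gibbs2 β (ham Edges ρ ω.1) (ham Edges ρ (discPerturb ω.1 ω.2.1 ω.2.2)) f
    ∂tripleGaussBer (Finset (Fin N)) (Real.exp (-t))

/-! ### Berge paths, distance, balls, cycles -/

/-- `(vs, es)` is a Berge path of length `ℓ` from `v` to `w` in the hypergraph `Edges`. -/
def IsBergePath (Edges : Finset (Finset (Fin N))) (ℓ : ℕ)
    (vs : Fin (ℓ + 1) → Fin N) (es : Fin ℓ → Finset (Fin N)) (v w : Fin N) : Prop :=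
  Function.Injective vs ∧ Function.Injective es ∧ (∀ k, es k ∈ Edges) ∧
    vs 0 = v ∧ vs (Fin.last ℓ) = w ∧
    ∀ k : Fin ℓ, vs k.castSucc ∈ es k ∧ vs k.succ ∈ es k

/-- Hypergraph (Berge) distance between two vertices, `∞` if there is no path. -/
def hdist (Edges : Finset (Finset (Fin N))) (v w : Fin N) : ℕ∞ :=
  sInf {d : ℕ∞ | ∃ (ℓ : ℕ) (vs : Fin (ℓ + 1) → Fin N) (es : Fin ℓ → Finset (Fin N)),
    IsBergePath Edges ℓ vs es v w ∧ d = (ℓ : ℕ∞)}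

open scoped Classical in
/-- The closed ball `B_r(v)` in the hypergraph distance. -/
def hball (Edges : Finset (Finset (Fin N))) (v : Fin N) (r : ℕ) : Finset (Fin N) :=
  Finset.univ.filter fun w => hdist Edges v w ≤ (r : ℕ∞)

/-- The hypergraph `Edges` contains a Berge cycle. -/
def HasBergeCycle (Edges : Finset (Finset (Fin N))) : Prop :=
  ∃ (ℓ : ℕ) (vs : Fin ℓ → Fin N) (es : Fin ℓ → Finset (Fin N)),
    2 ≤ ℓ ∧ Function.Injective vs ∧ Function.Injective es ∧ (∀ k, es k ∈ Edges) ∧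
      ∀ k : Fin ℓ, vs k ∈ es k ∧ vs (finRotate ℓ k) ∈ es k

/-- `min(d, c)` where `d ∈ ℕ∞` and `c ∈ ℝ` (equal to `c` if `d = ∞`). -/
def truncMin (d : ℕ∞) (c : ℝ) : ℝ :=
  if d = ⊤ then c else min (d.toNat : ℝ) c

/-! ### The diluted mixed p-spin random hypergraph -/

/-- Probability that a given hyperedge is present in the diluted model. -/
def edgeProb (α : ℕ → ℝ) (Δ N : ℕ) (e : Finset (Fin N)) : ℝ :=
  if 2 ≤ e.card ∧ e.card ≤ Δ then α e.card * N / (N.choose e.card) else 0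

/-- The law of the diluted mixed `p`-spin random hypergraph: each hyperedge `e` with
`2 ≤ |e| ≤ Δ` is present independently with probability `α_{|e|} N / C(N,|e|)`. -/
def graphMeasure (α : ℕ → ℝ) (Δ N : ℕ) : Measure (Finset (Fin N) → Bool) :=
  Measure.pi fun e => berBool (edgeProb α Δ N e)

/-- The (random) hyperedge set determined by the indicator `g`. -/
def edgesOf {N : ℕ} (Δ : ℕ) (g : Finset (Fin N) → Bool) : Finset (Finset (Fin N)) :=
  Finset.univ.filter fun e => g e = true ∧ 2 ≤ e.card ∧ e.card ≤ Δ

/-- `λ = Σ_p p(p-1) α_p`. -/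
def lamMix (α : ℕ → ℝ) (Δ : ℕ) : ℝ :=
  ∑ p ∈ Finset.Icc 2 Δ, (p : ℝ) * ((p : ℝ) - 1) * α p

/-- `λ' = Σ_p p(p-1)(p-2) α_p`. -/
def lamMix' (α : ℕ → ℝ) (Δ : ℕ) : ℝ :=
  ∑ p ∈ Finset.Icc 2 Δ, (p : ℝ) * ((p : ℝ) - 1) * ((p : ℝ) - 2) * α p

/-- The exploration (breadth-first search) process `(R_t, I_t, S_t, E_t)` of a hypergraph
started at the vertex `i`. -/
def explore {N : ℕ} (Edges : Finset (Finset (Fin N))) (i : Fin N) :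
    ℕ → Finset (Fin N) × Finset (Fin N) × Finset (Fin N) × Finset (Finset (Fin N))
  | 0 => (∅, {i}, Finset.univ.erase i, ∅)
  | t + 1 =>
      let P := explore Edges i t
      let Enew := Edges.filter fun e => (e ∩ P.2.1).Nonempty ∧ e ∩ P.1 = ∅
      (P.1 ∪ P.2.1, Enew.biUnion fun e => e ∩ P.2.2.1,
        P.2.2.1 \ Enew.biUnion fun e => e ∩ P.2.2.1, Enew)

/-- The set `I_t` of newly explored vertices at step `t`. -/
def Iset {N : ℕ} (Edges : Finset (Finset (Fin N))) (i : Fin N) (t : ℕ) : Finset (Fin N) :=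
  (explore Edges i t).2.1

/-- Disorder-and-graph-averaged two-replica observable under the continuous perturbation
in the diluted model. -/
def dilContExp (α : ℕ → ℝ) (Δ N : ℕ) (ρ : ℕ → ℝ → ℝ) (β t : ℝ)
    (f : (Fin N → Bool) → (Fin N → Bool) → ℝ) : ℝ :=
  ∫ ω : (Finset (Fin N) → Bool) × (Finset (Fin N) → ℝ) × (Finset (Fin N) → ℝ),
    gibbs2 β (ham (edgesOf Δ ω.1) ρ ω.2.1)
      (ham (edgesOf Δ ω.1) ρ (contPerturb t ω.2.1 ω.2.2)) f
    ∂((graphMeasure α Δ N).prod (pairGauss (Finset (Fin N))))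

/-- Disorder-and-graph-averaged two-replica observable under the discrete perturbation
in the diluted model. -/
def dilDiscExp (α : ℕ → ℝ) (Δ N : ℕ) (ρ : ℕ → ℝ → ℝ) (β t : ℝ)
    (f : (Fin N → Bool) → (Fin N → Bool) → ℝ) : ℝ :=
  ∫ ω : (Finset (Fin N) → Bool) ×
      (Finset (Fin N) → ℝ) × (Finset (Fin N) → ℝ) × (Finset (Fin N) → Bool),
    gibbs2 β (ham (edgesOf Δ ω.1) ρ ω.2.1)
      (ham (edgesOf Δ ω.1) ρ (discPerturb ω.2.1 ω.2.2.1 ω.2.2.2)) f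
    ∂((graphMeasure α Δ N).prod (tripleGaussBer (Finset (Fin N)) (Real.exp (-t))))

/-! ### The Lévy model -/

/-- Hamiltonian of the Lévy model: `H(σ) = a_N⁻¹ Σ_{i,j} ρ(J_{ij}) σ_i σ_j`. -/
def levyHam (N : ℕ) (aN : ℝ) (ρ : ℝ → ℝ) (J : Fin N × Fin N → ℝ) (σ : Fin N → Bool) : ℝ :=
  (∑ p : Fin N × Fin N, ρ (J p) * (spin (σ p.1) * spin (σ p.2))) / aN

/-- The normalization `a_N = inf{x > 0 : P(|ρ(J)| > x) ≤ 1/N}`. -/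
def levyAN (ρ : ℝ → ℝ) (N : ℕ) : ℝ :=
  sInf {x : ℝ | 0 < x ∧ ((gaussianReal 0 1) {j | x < |ρ j|}).toReal ≤ 1 / N}

/-- The coupled free energy `F_N(t,λ)` of the Lévy model, with the two systems
perturbed by the Ornstein–Uhlenbeck flow at time `t`. -/
def levyF (N : ℕ) (β aN lam : ℝ) (ρ : ℝ → ℝ) (t : ℝ) : ℝ :=
  (∫ ω : (Fin N × Fin N → ℝ) × (Fin N × Fin N → ℝ) × (Fin N × Fin N → ℝ),
      Real.log (∑ σ : Fin N → Bool, ∑ τ : Fin N → Bool,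
        Real.exp (β * levyHam N aN ρ (fun p => Real.exp (-t / 2) * ω.1 p +
              Real.sqrt (1 - Real.exp (-t)) * ω.2.1 p) σ +
          β * levyHam N aN ρ (fun p => Real.exp (-t / 2) * ω.1 p +
              Real.sqrt (1 - Real.exp (-t)) * ω.2.2 p) τ +
          lam * N * overlap σ τ ^ 2))
    ∂tripleGauss (Fin N × Fin N)) / N

/-- The coupled free energy `F_N(∞,λ)`: the two systems carry independent disorders. -/
def levyFinf (N : ℕ) (β aN lam : ℝ) (ρ : ℝ → ℝ) : ℝ :=
  (∫ ω : (Fin N × Fin N → ℝ) × (Fin N × Fin N → ℝ) × (Fin N × Fin N → ℝ),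
      Real.log (∑ σ : Fin N → Bool, ∑ τ : Fin N → Bool,
        Real.exp (β * levyHam N aN ρ ω.2.1 σ + β * levyHam N aN ρ ω.2.2 τ +
          lam * N * overlap σ τ ^ 2))
    ∂tripleGauss (Fin N × Fin N)) / N

/-- `φ(t) = Σ_r E[L_r(J¹(t)) L_r(J²(t))]` where `J^i(t) = e^{-t/2} J + √(1-e^{-t}) J^i`. -/
def phiFn (k m : ℕ) (L : Fin m → (Fin k → ℝ) → ℝ) (t : ℝ) : ℝ :=
  ∑ r : Fin m, ∫ ω : (Fin k → ℝ) × (Fin k → ℝ) × (Fin k → ℝ),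
    L r (fun l => Real.exp (-t / 2) * ω.1 l + Real.sqrt (1 - Real.exp (-t)) * ω.2.1 l) *
      L r (fun l => Real.exp (-t / 2) * ω.1 l + Real.sqrt (1 - Real.exp (-t)) * ω.2.2 l)
    ∂tripleGauss (Fin k)

/-! ### Auxiliary lemmas for `stmt11` -/

open scoped Classical

lemma chooseId (N p : ℕ) (h2 : 2 ≤ p) (hpN : p ≤ N) :
    N * (N - 1) * (N - 2).choose (p - 2) = p * (p - 1) * N.choose p := by
  obtain ⟨q, rfl⟩ : ∃ q, p = q + 2 := ⟨p - 2, by omega⟩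
  obtain ⟨M, rfl⟩ : ∃ M, N = M + 2 := ⟨N - 2, by omega⟩
  simp only [Nat.add_sub_cancel, show M + 2 - 1 = M + 1 from rfl, show q + 2 - 1 = q + 1 from rfl]
  have h1 := Nat.add_one_mul_choose_eq (M + 1) (q + 1)
  have h2 := Nat.add_one_mul_choose_eq M q
  nlinarith [h1, h2]

lemma pairCount {N : ℕ} (v w : Fin N) (hvw : v ≠ w) (p : ℕ) (h2 : 2 ≤ p) :
    (Finset.univ.filter fun e : Finset (Fin N) => v ∈ e ∧ w ∈ e ∧ e.card = p).card
      = (N - 2).choose (p - 2) := by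
  have hsub : ({v, w} : Finset (Fin N)).card = 2 := by
    rw [card_insert_of_notMem (by simpa using hvw), card_singleton]
  have hcompl : ({v, w}ᶜ : Finset (Fin N)).card = N - 2 := by
    rw [Finset.card_compl, hsub, Fintype.card_fin]
  rw [← hcompl, ← Finset.card_powersetCard (p - 2) ({v, w}ᶜ : Finset (Fin N))]
  apply Finset.card_bij' (fun e _ => e \ {v, w}) (fun s _ => s ∪ {v, w})
  · intro e he
    simp only [mem_filter, mem_univ, true_and] at he
    apply Finset.sdiff_union_of_subset
    intro x hx; simp only [mem_insert, mem_singleton] at hx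
    rcases hx with rfl | rfl
    · exact he.1
    · exact he.2.1
  · intro s hs
    rw [mem_powersetCard] at hs
    apply Finset.union_sdiff_cancel_right
    rw [Finset.disjoint_left]
    intro x hx hx2
    have := hs.1 hx
    simp only [Finset.mem_compl] at this
    exact this hx2
  · intro e he
    simp only [mem_filter, mem_univ, true_and] at he
    obtain ⟨hv, hw, hc⟩ := he
    have hss : ({v, w} : Finset (Fin N)) ⊆ e := by
      intro x hx; simp only [mem_insert, mem_singleton] at hx
      rcases hx with rfl | rfl <;> assumption
    rw [mem_powersetCard]
    constructor
    · intro x hx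
      simp only [mem_sdiff] at hx
      simpa using hx.2
    · rw [card_sdiff_of_subset hss, hc, hsub]
  · intro s hs
    rw [mem_powersetCard] at hs
    obtain ⟨hss, hc⟩ := hs
    have hdisj : Disjoint s ({v, w} : Finset (Fin N)) := by
      rw [Finset.disjoint_left]
      intro x hx hx2
      have := hss hx
      simp only [Finset.mem_compl] at this
      exact this hx2
    simp only [mem_filter, mem_univ, true_and]
    refine ⟨by simp, by simp, ?_⟩
    rw [card_union_of_disjoint hdisj, hc, hsub]
    omega

lemma chooseIdR (α : ℕ → ℝ) (N p : ℕ) (h2 : 2 ≤ p) (hpN : p ≤ N) :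
    (((N - 2).choose (p - 2) : ℕ) : ℝ) * (α p * N / (N.choose p : ℝ))
      = (p : ℝ) * ((p : ℝ) - 1) * α p / ((N : ℝ) - 1) := by
  have key := chooseId N p h2 hpN
  have keyR : (N : ℝ) * ((N : ℝ) - 1) * (((N - 2).choose (p - 2) : ℕ) : ℝ)
      = (p : ℝ) * ((p : ℝ) - 1) * ((N.choose p : ℕ) : ℝ) := by
    have e1 : ((N - 1 : ℕ) : ℝ) = (N : ℝ) - 1 := by
      rw [Nat.cast_sub (by omega : 1 ≤ N)]; norm_num
    have e2 : ((p - 1 : ℕ) : ℝ) = (p : ℝ) - 1 := by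
      rw [Nat.cast_sub (by omega : 1 ≤ p)]; norm_num
    rw [← e1, ← e2]
    exact_mod_cast congrArg (Nat.cast : ℕ → ℝ) key
  have hCp : (N.choose p : ℝ) ≠ 0 := by
    have := Nat.choose_pos hpN; positivity
  have hN1 : (N : ℝ) - 1 ≠ 0 := by
    have h2N : 2 ≤ N := le_trans h2 hpN
    have : (2 : ℝ) ≤ (N : ℝ) := by exact_mod_cast h2N
    linarith
  field_simp
  linear_combination α p * keyR

lemma pairSum {N : ℕ} (α : ℕ → ℝ) (Δ : ℕ) (hN : 1 ≤ N)
    (hα : ∀ p, 2 ≤ p → p ≤ Δ → 0 < α p)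
    (hchoose : ∀ p, 2 ≤ p → p ≤ Δ → α p * N ≤ (N.choose p : ℝ))
    (v w : Fin N) (hvw : v ≠ w) :
    ∑ e ∈ univ.filter (fun e : Finset (Fin N) => v ∈ e ∧ w ∈ e ∧ 2 ≤ e.card ∧ e.card ≤ Δ),
      edgeProb α Δ N e = lamMix α Δ / ((N : ℝ) - 1) := by
  have hpN : ∀ p, 2 ≤ p → p ≤ Δ → p ≤ N := by
    intro p h1 h2
    by_contra h
    have h0 : N.choose p = 0 := Nat.choose_eq_zero_of_lt (by omega)
    have hc := hchoose p h1 h2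
    rw [h0] at hc
    have h1' := hα p h1 h2
    have : (0 : ℝ) < α p * N := by
      have : (1 : ℝ) ≤ (N : ℝ) := by exact_mod_cast hN
      nlinarith
    simp at hc
    linarith
  rw [← Finset.sum_fiberwise_of_maps_to (g := fun e => e.card) (t := Finset.Icc 2 Δ)
    (fun e he => by simp only [mem_filter] at he; exact Finset.mem_Icc.2 ⟨he.2.2.2.1, he.2.2.2.2⟩)]
  rw [lamMix, Finset.sum_div]
  apply Finset.sum_congr rfl
  intro p hp
  rw [Finset.mem_Icc] at hp
  have hset : ((univ.filter (fun e : Finset (Fin N) => v ∈ e ∧ w ∈ e ∧ 2 ≤ e.card ∧ e.card ≤ Δ)).filter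
      (fun e => e.card = p)) = univ.filter (fun e : Finset (Fin N) => v ∈ e ∧ w ∈ e ∧ e.card = p) := by
    ext e
    simp only [Finset.mem_filter, mem_univ, true_and]
    constructor
    · rintro ⟨⟨h1, h2, _, _⟩, h5⟩; exact ⟨h1, h2, h5⟩
    · rintro ⟨h1, h2, h5⟩; exact ⟨⟨h1, h2, by omega, by omega⟩, h5⟩
  rw [hset]
  have hval : ∀ e ∈ univ.filter (fun e : Finset (Fin N) => v ∈ e ∧ w ∈ e ∧ e.card = p),
      edgeProb α Δ N e = α p * N / (N.choose p : ℝ) := by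
    intro e he
    simp only [Finset.mem_filter, mem_univ, true_and] at he
    rw [edgeProb, he.2.2, if_pos ⟨hp.1, hp.2⟩]
  rw [Finset.sum_congr rfl hval, Finset.sum_const, nsmul_eq_mul, pairCount v w hvw p hp.1]
  exact chooseIdR α N p hp.1 (hpN p hp.1 hp.2)

lemma edgeProb_nonneg {N : ℕ} (α : ℕ → ℝ) (Δ : ℕ)
    (hα : ∀ p, 2 ≤ p → p ≤ Δ → 0 < α p) (e : Finset (Fin N)) :
    0 ≤ edgeProb α Δ N e := by
  rw [edgeProb]
  split_ifs with h
  · have := hα e.card h.1 h.2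
    positivity
  · exact le_rfl

lemma edgeProb_le_one {N : ℕ} (α : ℕ → ℝ) (Δ : ℕ) (hN : 1 ≤ N)
    (hα : ∀ p, 2 ≤ p → p ≤ Δ → 0 < α p)
    (hchoose : ∀ p, 2 ≤ p → p ≤ Δ → α p * N ≤ (N.choose p : ℝ)) (e : Finset (Fin N)) :
    edgeProb α Δ N e ≤ 1 := by
  rw [edgeProb]
  split_ifs with h
  · have hc := hchoose e.card h.1 h.2
    have hapos := hα e.card h.1 h.2
    have hNpos : (0 : ℝ) < (N : ℝ) := by exact_mod_cast hN
    have hcc : (0 : ℝ) < (N.choose e.card : ℝ) := lt_of_lt_of_le (by nlinarith) hc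
    rw [div_le_one hcc]
    exact hc
  · norm_num

lemma berBool_true (p : ℝ) : berBool p {true} = ENNReal.ofReal p := by
  simp [berBool, Measure.dirac_apply' _ (measurableSet_singleton true)]

lemma berBool_isProb (p : ℝ) (h0 : 0 ≤ p) (h1 : p ≤ 1) :
    IsProbabilityMeasure (berBool p) := by
  constructor
  simp only [berBool, Measure.coe_add, Pi.add_apply, Measure.smul_apply, smul_eq_mul,
    Measure.dirac_apply' _ MeasurableSet.univ, Set.indicator_univ, Pi.one_apply, mul_one]
  rw [← ENNReal.ofReal_add h0 (by linarith)]
  norm_num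

lemma cylinderInt {N : ℕ} (α : ℕ → ℝ) (Δ : ℕ)
    (h0 : ∀ e : Finset (Fin N), 0 ≤ edgeProb α Δ N e)
    (h1 : ∀ e : Finset (Fin N), edgeProb α Δ N e ≤ 1)
    {ℓ : ℕ} (es : Fin ℓ → Finset (Fin N)) (hinj : Function.Injective es) :
    ∫ g, (if ∀ k, g (es k) = true then (1 : ℝ) else 0) ∂graphMeasure α Δ N
      = ∏ k, edgeProb α Δ N (es k) := by
  haveI : ∀ e : Finset (Fin N), IsProbabilityMeasure (berBool (edgeProb α Δ N e)) :=
    fun e => berBool_isProb _ (h0 e) (h1 e)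
  set S : Set (Finset (Fin N) → Bool) := {g | ∀ k, g (es k) = true} with hS
  have hSm : MeasurableSet S := by
    have : S = ⋂ k, (fun g : Finset (Fin N) → Bool => g (es k)) ⁻¹' {true} := by
      ext g; simp [hS]
    rw [this]
    exact MeasurableSet.iInter fun k =>
      (measurable_pi_apply (es k)) (measurableSet_singleton true)
  have hfun : (fun g : Finset (Fin N) → Bool => if ∀ k, g (es k) = true then (1 : ℝ) else 0)
      = S.indicator 1 := by
    funext g
    by_cases h : ∀ k, g (es k) = true <;> simp [hS, Set.indicator, h]
  rw [hfun, integral_indicator_one hSm]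
  have hSpi : S = Set.univ.pi
      (fun e => if e ∈ Finset.image es Finset.univ then ({true} : Set Bool) else Set.univ) := by
    ext g
    simp only [hS, Set.mem_setOf_eq, Set.mem_pi, Set.mem_univ, forall_true_left]
    constructor
    · intro h e
      split_ifs with he
      · obtain ⟨k, -, rfl⟩ := Finset.mem_image.1 he
        simpa using h k
      · trivial
    · intro h k
      have := h (es k)
      rw [if_pos (Finset.mem_image.2 ⟨k, Finset.mem_univ k, rfl⟩)] at this
      simpa using this
  rw [hSpi, graphMeasure, measureReal_def, Measure.pi_pi]
  have heach : ∀ e : Finset (Fin N),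
      berBool (edgeProb α Δ N e)
          (if e ∈ Finset.image es Finset.univ then ({true} : Set Bool) else Set.univ)
        = if e ∈ Finset.image es Finset.univ then ENNReal.ofReal (edgeProb α Δ N e) else 1 := by
    intro e
    split_ifs
    · exact berBool_true _
    · exact measure_univ
  rw [Finset.prod_congr rfl fun e _ => heach e, Finset.prod_ite_mem, Finset.univ_inter,
    Finset.prod_image (fun a _ b _ h => hinj h), ENNReal.toReal_prod]
  exact Finset.prod_congr rfl fun k _ => ENNReal.toReal_ofReal (h0 (es k))

/-- Candidate Berge paths from `i` of length `ℓ` (graph-independent data). -/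
def candSet (Δ : ℕ) {N : ℕ} (i : Fin N) (ℓ : ℕ) :
    Finset ((Fin (ℓ + 1) → Fin N) × (Fin ℓ → Finset (Fin N))) :=
  Finset.univ.filter fun q => Function.Injective q.1 ∧ Function.Injective q.2 ∧ q.1 0 = i ∧
    ∀ k : Fin ℓ, (q.1 k.castSucc ∈ q.2 k ∧ q.1 k.succ ∈ q.2 k) ∧
      2 ≤ (q.2 k).card ∧ (q.2 k).card ≤ Δ

/-- Berge paths from `i` of length `ℓ` present in the graph `g`. -/
def pathFin (Δ : ℕ) {N : ℕ} (g : Finset (Fin N) → Bool) (i : Fin N) (ℓ : ℕ) :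
    Finset ((Fin (ℓ + 1) → Fin N) × (Fin ℓ → Finset (Fin N))) :=
  (candSet Δ i ℓ).filter fun q => ∀ k, g (q.2 k) = true

lemma ball_card_le (Δ : ℕ) {N : ℕ} (g : Finset (Fin N) → Bool) (i : Fin N) (t : ℕ) :
    ((hball (edgesOf Δ g) i t).card : ℝ)
      ≤ ∑ ℓ ∈ Finset.range (t + 1), ((pathFin Δ g i ℓ).card : ℝ) := by
  have key : (hball (edgesOf Δ g) i t) ⊆ (Finset.range (t + 1)).biUnion
      (fun ℓ => (pathFin Δ g i ℓ).image fun q => q.1 (Fin.last ℓ)) := by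
    intro w hw
    have hw' : hdist (edgesOf Δ g) i w ≤ (t : ℕ∞) := by
      simpa [hball] using hw
    set Sd : Set ℕ∞ := {d : ℕ∞ | ∃ (ℓ : ℕ) (vs : Fin (ℓ + 1) → Fin N)
      (es : Fin ℓ → Finset (Fin N)), IsBergePath (edgesOf Δ g) ℓ vs es i w ∧ d = (ℓ : ℕ∞)}
      with hSd
    have hne : Sd.Nonempty := by
      by_contra h
      rw [Set.not_nonempty_iff_eq_empty] at h
      have h2 : sInf Sd = ⊤ := by rw [h]; exact sInf_empty
      rw [hdist, ← hSd, h2, top_le_iff] at hw'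
      exact absurd hw' (by simp)
    have hmem : sInf Sd ∈ Sd := csInf_mem hne
    obtain ⟨ℓ, vs, es, hpath, hd⟩ := hmem
    have hle : sInf Sd ≤ (t : ℕ∞) := by rw [hdist, ← hSd] at hw'; exact hw'
    rw [hd, Nat.cast_le] at hle
    obtain ⟨hvsi, hesi, hesmem, hvs0, hvsl, hinc⟩ := hpath
    refine Finset.mem_biUnion.2 ⟨ℓ, Finset.mem_range.2 (by omega), ?_⟩
    refine Finset.mem_image.2 ⟨(vs, es), ?_, hvsl⟩
    rw [pathFin, Finset.mem_filter]
    constructor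
    · rw [candSet, Finset.mem_filter]
      refine ⟨Finset.mem_univ _, hvsi, hesi, hvs0, fun k => ⟨hinc k, ?_⟩⟩
      have := hesmem k
      simp only [edgesOf, Finset.mem_filter, Finset.mem_univ, true_and] at this
      exact this.2
    · intro k
      have := hesmem k
      simp only [edgesOf, Finset.mem_filter, Finset.mem_univ, true_and] at this
      exact this.1
  calc ((hball (edgesOf Δ g) i t).card : ℝ)
      ≤ ((((Finset.range (t + 1)).biUnion
          (fun ℓ => (pathFin Δ g i ℓ).image fun q => q.1 (Fin.last ℓ))).card : ℕ) : ℝ) := by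
        exact_mod_cast Finset.card_le_card key
    _ ≤ ∑ ℓ ∈ Finset.range (t + 1), ((pathFin Δ g i ℓ).card : ℝ) := by
        have h1 := Finset.card_biUnion_le (s := Finset.range (t + 1))
          (t := fun ℓ => (pathFin Δ g i ℓ).image fun q => q.1 (Fin.last ℓ))
        have h2 : ∑ ℓ ∈ Finset.range (t + 1),
            ((pathFin Δ g i ℓ).image fun q => q.1 (Fin.last ℓ)).card
            ≤ ∑ ℓ ∈ Finset.range (t + 1), (pathFin Δ g i ℓ).card :=
          Finset.sum_le_sum fun ℓ _ => Finset.card_image_le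
        exact_mod_cast le_trans h1 h2

lemma two_le_N {N : ℕ} (α : ℕ → ℝ) (Δ : ℕ) (hΔ : 2 ≤ Δ) (hN : 1 ≤ N)
    (hα : ∀ p, 2 ≤ p → p ≤ Δ → 0 < α p)
    (hchoose : ∀ p, 2 ≤ p → p ≤ Δ → α p * N ≤ (N.choose p : ℝ)) : 2 ≤ N := by
  by_contra h
  have h0 : N.choose 2 = 0 := Nat.choose_eq_zero_of_lt (by omega)
  have hc := hchoose 2 le_rfl hΔ
  rw [h0] at hc
  have h1' := hα 2 le_rfl hΔ
  have : (0 : ℝ) < α 2 * N := by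
    have : (1 : ℝ) ≤ (N : ℝ) := by exact_mod_cast hN
    nlinarith
  simp at hc
  linarith

lemma lamMix_nonneg (α : ℕ → ℝ) (Δ : ℕ) (hα : ∀ p, 2 ≤ p → p ≤ Δ → 0 < α p) :
    0 ≤ lamMix α Δ := by
  apply Finset.sum_nonneg
  intro p hp
  rw [Finset.mem_Icc] at hp
  have h2 : (2 : ℝ) ≤ (p : ℝ) := by exact_mod_cast hp.1
  have := hα p hp.1 hp.2
  have hp0 : (0 : ℝ) < (p : ℝ) := by linarith
  have hp1 : (0 : ℝ) < (p : ℝ) - 1 := by linarith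
  exact le_of_lt (mul_pos (mul_pos hp0 hp1) this)

set_option maxHeartbeats 1000000 in
lemma candSum {N : ℕ} (α : ℕ → ℝ) (Δ : ℕ) (hΔ : 2 ≤ Δ) (hN : 1 ≤ N)
    (hα : ∀ p, 2 ≤ p → p ≤ Δ → 0 < α p)
    (hchoose : ∀ p, 2 ≤ p → p ≤ Δ → α p * N ≤ (N.choose p : ℝ))
    (i : Fin N) (ℓ : ℕ) :
    ∑ q ∈ candSet Δ i ℓ, ∏ k, edgeProb α Δ N (q.2 k) ≤ lamMix α Δ ^ ℓ := by
  have hN2 : 2 ≤ N := two_le_N α Δ hΔ hN hα hchoose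
  have hN1R : (1 : ℝ) ≤ (N : ℝ) - 1 := by
    have : (2 : ℝ) ≤ (N : ℝ) := by exact_mod_cast hN2
    linarith
  set L : ℝ := lamMix α Δ / ((N : ℝ) - 1) with hL
  have hL0 : 0 ≤ L := div_nonneg (lamMix_nonneg α Δ hα) (by linarith)
  have hw0 : ∀ q : (Fin (ℓ + 1) → Fin N) × (Fin ℓ → Finset (Fin N)),
      0 ≤ ∏ k, edgeProb α Δ N (q.2 k) :=
    fun q => Finset.prod_nonneg fun k _ => edgeProb_nonneg α Δ hα _
  set P : (Fin (ℓ + 1) → Fin N) → Prop := fun vs => Function.Injective vs ∧ vs 0 = i with hP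
  set E : Fin N → Fin N → Finset (Finset (Fin N)) := fun v w =>
    Finset.univ.filter (fun e : Finset (Fin N) => v ∈ e ∧ w ∈ e ∧ 2 ≤ e.card ∧ e.card ≤ Δ)
    with hE
  set candNI : Finset ((Fin (ℓ + 1) → Fin N) × (Fin ℓ → Finset (Fin N))) :=
    Finset.univ.filter (fun q => P q.1 ∧ ∀ k : Fin ℓ, q.2 k ∈ E (q.1 k.castSucc) (q.1 k.succ))
    with hcandNI
  have hsub : candSet Δ i ℓ ⊆ candNI := by
    intro q hq
    rw [candSet, Finset.mem_filter] at hq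
    obtain ⟨-, h1, h2, h3, h4⟩ := hq
    rw [hcandNI, Finset.mem_filter]
    refine ⟨Finset.mem_univ _, ⟨h1, h3⟩, fun k => ?_⟩
    rw [hE]
    simp only [Finset.mem_filter, Finset.mem_univ, true_and]
    exact ⟨(h4 k).1.1, (h4 k).1.2, (h4 k).2.1, (h4 k).2.2⟩
  have step1 : ∑ q ∈ candSet Δ i ℓ, ∏ k, edgeProb α Δ N (q.2 k)
      ≤ ∑ q ∈ candNI, ∏ k, edgeProb α Δ N (q.2 k) :=
    Finset.sum_le_sum_of_subset_of_nonneg hsub fun q _ _ => hw0 q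
  have step2 : ∑ q ∈ candNI, ∏ k, edgeProb α Δ N (q.2 k)
      = ∑ vs : Fin (ℓ + 1) → Fin N, if P vs then L ^ ℓ else 0 := by
    rw [hcandNI, Finset.sum_filter, Fintype.sum_prod_type]
    apply Finset.sum_congr rfl
    intro vs _
    by_cases hvs : P vs
    · rw [if_pos hvs]
      have hred : ∀ es : Fin ℓ → Finset (Fin N),
          (if P vs ∧ (∀ k : Fin ℓ, es k ∈ E (vs k.castSucc) (vs k.succ)) then
              ∏ k, edgeProb α Δ N (es k) else 0)
            = (if (∀ k : Fin ℓ, es k ∈ E (vs k.castSucc) (vs k.succ)) then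
              ∏ k, edgeProb α Δ N (es k) else 0) := by
        intro es; exact if_congr (and_iff_right hvs) rfl rfl
      rw [Finset.sum_congr rfl fun es _ => hred es]
      have hfs : (Finset.univ.filter
            fun es : Fin ℓ → Finset (Fin N) => ∀ k : Fin ℓ, es k ∈ E (vs k.castSucc) (vs k.succ))
          = Fintype.piFinset (fun k : Fin ℓ => E (vs k.castSucc) (vs k.succ)) := by
        ext es
        simp only [Finset.mem_filter, Finset.mem_univ, true_and, Fintype.mem_piFinset]
      calc (∑ es : Fin ℓ → Finset (Fin N),
              if (∀ k : Fin ℓ, es k ∈ E (vs k.castSucc) (vs k.succ)) then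
                ∏ k, edgeProb α Δ N (es k) else 0)
          = ∑ es ∈ Fintype.piFinset (fun k : Fin ℓ => E (vs k.castSucc) (vs k.succ)),
              ∏ k, edgeProb α Δ N (es k) := by
            rw [← hfs, Finset.sum_filter]
        _ = ∏ k : Fin ℓ, ∑ e ∈ E (vs k.castSucc) (vs k.succ), edgeProb α Δ N e :=
            (Finset.prod_univ_sum (fun k : Fin ℓ => E (vs k.castSucc) (vs k.succ)) (fun _ e => edgeProb α Δ N e)).symm
        _ = L ^ ℓ := by
            have hone : ∀ k : Fin ℓ, ∑ e ∈ E (vs k.castSucc) (vs k.succ), edgeProb α Δ N e = L := by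
              intro k
              rw [hE, hL]
              apply pairSum α Δ hN hα hchoose
              intro hc
              exact absurd (hvs.1 hc) (ne_of_lt (Fin.castSucc_lt_succ : k.castSucc < k.succ))
            rw [Finset.prod_congr rfl fun k _ => hone k, Finset.prod_const, Finset.card_univ,
              Fintype.card_fin]
    · rw [if_neg hvs]
      apply Finset.sum_eq_zero
      intro es _
      rw [if_neg]
      tauto
  have hcard : ((Finset.univ.filter P).card : ℝ) ≤ ((N : ℝ) - 1) ^ ℓ := by
    have hinj : Set.InjOn (fun vs : Fin (ℓ + 1) → Fin N => fun k : Fin ℓ => vs (Fin.succ k))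
        (Finset.univ.filter P : Finset (Fin (ℓ + 1) → Fin N)) := by
      intro vs hvs vs' hvs' h
      rw [Finset.coe_filter] at hvs hvs'
      simp only [Set.mem_setOf_eq] at hvs hvs'
      funext j
      induction j using Fin.cases with
      | zero => rw [hvs.2.2, hvs'.2.2]
      | succ k => exact congrFun h k
    have hmap : ∀ vs ∈ Finset.univ.filter P,
        (fun k : Fin ℓ => vs (Fin.succ k)) ∈
          Fintype.piFinset (fun _ : Fin ℓ => Finset.univ.erase i) := by
      intro vs hvs
      rw [Finset.mem_filter] at hvs
      rw [Fintype.mem_piFinset]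
      intro k
      rw [Finset.mem_erase]
      refine ⟨?_, Finset.mem_univ _⟩
      intro h
      have h0 : vs (Fin.succ k) = vs 0 := by rw [h, hvs.2.2]
      exact Fin.succ_ne_zero k (hvs.2.1 h0)
    have hle := Finset.card_le_card_of_injOn _ hmap hinj
    have hcardT : (Fintype.piFinset (fun _ : Fin ℓ => (Finset.univ.erase i : Finset (Fin N)))).card
        = (N - 1) ^ ℓ := by
      rw [Fintype.card_piFinset]
      simp [Finset.card_erase_of_mem, Finset.card_univ]
    have : ((Finset.univ.filter P).card : ℝ) ≤ (((N - 1) ^ ℓ : ℕ) : ℝ) := by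
      exact_mod_cast hcardT ▸ hle
    refine le_trans this (le_of_eq ?_)
    rw [Nat.cast_pow, Nat.cast_sub hN]
    norm_num
  calc ∑ q ∈ candSet Δ i ℓ, ∏ k, edgeProb α Δ N (q.2 k)
      ≤ ∑ q ∈ candNI, ∏ k, edgeProb α Δ N (q.2 k) := step1
    _ = ∑ vs : Fin (ℓ + 1) → Fin N, if P vs then L ^ ℓ else 0 := step2
    _ = ((Finset.univ.filter P).card : ℝ) * L ^ ℓ := by
        rw [← Finset.sum_filter, Finset.sum_const, nsmul_eq_mul]
    _ ≤ ((N : ℝ) - 1) ^ ℓ * L ^ ℓ := by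
        apply mul_le_mul_of_nonneg_right hcard (pow_nonneg hL0 ℓ)
    _ = lamMix α Δ ^ ℓ := by
        rw [hL, div_pow, mul_div_cancel₀]
        exact pow_ne_zero _ (by linarith)

lemma expPath {N : ℕ} (α : ℕ → ℝ) (Δ : ℕ) (hΔ : 2 ≤ Δ) (hN : 1 ≤ N)
    (hα : ∀ p, 2 ≤ p → p ≤ Δ → 0 < α p)
    (hchoose : ∀ p, 2 ≤ p → p ≤ Δ → α p * N ≤ (N.choose p : ℝ))
    (i : Fin N) (ℓ : ℕ) :
    ∫ g, ((pathFin Δ g i ℓ).card : ℝ) ∂graphMeasure α Δ N ≤ lamMix α Δ ^ ℓ := by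
  have h0 := edgeProb_nonneg α Δ hα (N := N)
  have h1 := edgeProb_le_one α Δ hN hα hchoose
  haveI : ∀ e : Finset (Fin N), IsProbabilityMeasure (berBool (edgeProb α Δ N e)) :=
    fun e => berBool_isProb _ (h0 e) (h1 e)
  haveI : IsProbabilityMeasure (graphMeasure α Δ N) := by
    rw [graphMeasure]; infer_instance
  have hpt : ∀ g : Finset (Fin N) → Bool, ((pathFin Δ g i ℓ).card : ℝ)
      = ∑ q ∈ candSet Δ i ℓ, (if ∀ k, g (q.2 k) = true then (1 : ℝ) else 0) := by
    intro g
    rw [pathFin, Finset.card_filter]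
    push_cast
    rfl
  calc ∫ g, ((pathFin Δ g i ℓ).card : ℝ) ∂graphMeasure α Δ N
      = ∫ g, (∑ q ∈ candSet Δ i ℓ, if ∀ k, g (q.2 k) = true then (1 : ℝ) else 0)
          ∂graphMeasure α Δ N := by
        exact integral_congr_ae (Filter.Eventually.of_forall hpt)
    _ = ∑ q ∈ candSet Δ i ℓ,
          ∫ g, (if ∀ k, g (q.2 k) = true then (1 : ℝ) else 0) ∂graphMeasure α Δ N :=
        integral_finset_sum _ fun q _ => Integrable.of_finite
    _ = ∑ q ∈ candSet Δ i ℓ, ∏ k, edgeProb α Δ N (q.2 k) := by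
        apply Finset.sum_congr rfl
        intro q hq
        rw [candSet, Finset.mem_filter] at hq
        exact cylinderInt α Δ h0 h1 q.2 hq.2.2.1
    _ ≤ lamMix α Δ ^ ℓ := candSum α Δ hΔ hN hα hchoose i ℓ

/-- Volume growth of the diluted mixed `p`-spin random hypergraph: if
`λ > 1`, there is a constant `C = C((α_p))` such that `E|B_t(i)| ≤ C λ^t` for every vertex
`i` and every `t ∈ ℤ₊`. -/
theorem stmt11 (Δ : ℕ) (hΔ : 2 ≤ Δ) (α : ℕ → ℝ)
    (hα : ∀ p, 2 ≤ p → p ≤ Δ → 0 < α p) (hlam : 1 < lamMix α Δ) :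
    ∃ C > 0, ∀ N : ℕ, 1 ≤ N →
      (∀ p, 2 ≤ p → p ≤ Δ → α p * N ≤ (N.choose p : ℝ)) →
      ∀ (i : Fin N) (t : ℕ),
        (∫ g, ((hball (edgesOf Δ g) i t).card : ℝ) ∂graphMeasure α Δ N)
          ≤ C * lamMix α Δ ^ t := by
  have hden : 0 < lamMix α Δ - 1 := by linarith
  refine ⟨lamMix α Δ / (lamMix α Δ - 1), div_pos (by linarith) hden, ?_⟩
  intro N hN hchoose i t
  have h0 := edgeProb_nonneg α Δ hα (N := N)
  have h1 := edgeProb_le_one α Δ hN hα hchoose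
  haveI : ∀ e : Finset (Fin N), IsProbabilityMeasure (berBool (edgeProb α Δ N e)) :=
    fun e => berBool_isProb _ (h0 e) (h1 e)
  haveI : IsProbabilityMeasure (graphMeasure α Δ N) := by
    rw [graphMeasure]; infer_instance
  calc ∫ g, ((hball (edgesOf Δ g) i t).card : ℝ) ∂graphMeasure α Δ N
      ≤ ∫ g, (∑ ℓ ∈ Finset.range (t + 1), ((pathFin Δ g i ℓ).card : ℝ))
          ∂graphMeasure α Δ N := by
        apply integral_mono Integrable.of_finite Integrable.of_finite
        intro g
        exact ball_card_le Δ g i t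
    _ = ∑ ℓ ∈ Finset.range (t + 1),
          ∫ g, ((pathFin Δ g i ℓ).card : ℝ) ∂graphMeasure α Δ N :=
        integral_finset_sum _ fun ℓ _ => Integrable.of_finite
    _ ≤ ∑ ℓ ∈ Finset.range (t + 1), lamMix α Δ ^ ℓ :=
        Finset.sum_le_sum fun ℓ _ => expPath α Δ hΔ hN hα hchoose i ℓ
    _ = (lamMix α Δ ^ (t + 1) - 1) / (lamMix α Δ - 1) :=
        geom_sum_eq (ne_of_gt hlam) (t + 1)
    _ ≤ lamMix α Δ ^ (t + 1) / (lamMix α Δ - 1) := by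
        gcongr
        linarith
    _ = lamMix α Δ / (lamMix α Δ - 1) * lamMix α Δ ^ t := by
        rw [pow_succ]; ring
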